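/- Let k be algebraically closed of characteristic 0 and let (X1, X2) be a representation of the super Jordan plane on a finite-dimensional k-vector space V; set T := X2². Then V is the internal direct sum, over the distinct eigenvalues λ of T, of the generalized eigenspaces of T, and each of these is a submodule. In particular, if the representation is indecomposable then T has a unique eigenvalue λ, and every eigenvalue μ of X2 satisfies μ² = λ (so X2 has either a unique eigenvalue or exactly the two eigenvalues μ and −μ for some μ ≠ 0). -/

import Mathlib

open Module LinearMap Set

section Aux

variable {k V : Type*} [Field k] [AddCommGroup V] [Module k V]

lemma sj_yx1 {X1 X2 : Module.End k V} (h1 : X1 * X1 = 0) :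
    (X1 * X2 + X2 * X1) * X1 = X1 * X2 * X1 := by
  rw [add_mul, mul_assoc X2, h1, mul_zero, add_zero]

lemma sj_x1y {X1 X2 : Module.End k V} (h1 : X1 * X1 = 0) :
    X1 * (X1 * X2 + X2 * X1) = X1 * X2 * X1 := by
  simp only [mul_add, ← mul_assoc, h1, zero_mul, zero_add]

lemma sj_comm_x1y {X1 X2 : Module.End k V} (h1 : X1 * X1 = 0) :
    (X1 * X2 + X2 * X1) * X1 = X1 * (X1 * X2 + X2 * X1) := by
  rw [sj_x1y h1, sj_yx1 h1]

lemma sj_Tx1 {X1 X2 : Module.End k V} (h1 : X1 * X1 = 0)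
    (h2 : X2 ^ 2 * X1 = X1 * X2 ^ 2 + X1 * X2 * X1) :
    X2 ^ 2 * X1 = X1 * X2 ^ 2 + (X1 * X2 + X2 * X1) * X1 := by
  rw [sj_yx1 h1]; exact h2

lemma sj_x2y {X1 X2 : Module.End k V} (h1 : X1 * X1 = 0)
    (h2 : X2 ^ 2 * X1 = X1 * X2 ^ 2 + X1 * X2 * X1) :
    X2 * (X1 * X2 + X2 * X1) = (X1 * X2 + X2 * X1) * X2 + X1 * (X1 * X2 + X2 * X1) := by
  rw [sj_x1y h1]
  have e : X2 * (X1 * X2 + X2 * X1) - (X1 * X2 + X2 * X1) * X2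
      = X2 ^ 2 * X1 - X1 * X2 ^ 2 := by noncomm_ring
  have e2 : X2 * (X1 * X2 + X2 * X1) - (X1 * X2 + X2 * X1) * X2 = X1 * X2 * X1 := by
    rw [e, h2]; abel
  linear_combination (norm := noncomm_ring) e2

lemma sj_Ty {X1 X2 : Module.End k V} (h1 : X1 * X1 = 0)
    (h2 : X2 ^ 2 * X1 = X1 * X2 ^ 2 + X1 * X2 * X1) :
    X2 ^ 2 * (X1 * X2 + X2 * X1) = (X1 * X2 + X2 * X1) * X2 ^ 2
      + (X1 * X2 + X2 * X1) * (X1 * X2 + X2 * X1) := by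
  set y := X1 * X2 + X2 * X1 with hy
  have hx2y := sj_x2y h1 h2
  have hyy : y * y = X1 * y * X2 + X2 * X1 * y := by
    rw [hy]
    calc (X1 * X2 + X2 * X1) * y = X1 * (X2 * y) + X2 * X1 * y := by noncomm_ring
    _ = X1 * (y * X2 + X1 * y) + X2 * X1 * y := by rw [← hx2y]
    _ = X1 * y * X2 + X1 * X1 * y + X2 * X1 * y := by noncomm_ring
    _ = X1 * y * X2 + X2 * X1 * y := by rw [h1]; noncomm_ring
  calc X2 ^ 2 * y = X2 * (X2 * y) := by noncomm_ring
  _ = X2 * (y * X2 + X1 * y) := by rw [hx2y]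
  _ = X2 * y * X2 + X2 * X1 * y := by noncomm_ring
  _ = (y * X2 + X1 * y) * X2 + X2 * X1 * y := by rw [hx2y]
  _ = y * X2 ^ 2 + (X1 * y * X2 + X2 * X1 * y) := by noncomm_ring
  _ = y * X2 ^ 2 + y * y := by rw [← hyy]

end Aux

section Aux2

variable {k V : Type*} [Field k] [AddCommGroup V] [Module k V]

-- T * y^n = y^n * T + n • y^(n+1)
lemma sj_Tyn {T y : Module.End k V} (hTy : T * y = y * T + y * y) (n : ℕ) :
    T * y ^ n = y ^ n * T + (n : k) • y ^ (n + 1) := by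
  induction n with
  | zero => simp
  | succ n ih =>
    have : T * y ^ (n + 1) = (T * y ^ n) * y := by rw [pow_succ]; noncomm_ring
    rw [this, ih]
    rw [add_mul, smul_mul_assoc, mul_assoc, hTy]
    push_cast
    have h1 : y ^ n * (y * T + y * y) = y ^ (n+1) * T + y ^ n * (y * y) := by
      rw [mul_add, pow_succ, mul_assoc]
    rw [h1]
    have h2 : y ^ n * (y * y) = y ^ (n + 2) := by
      rw [pow_succ, pow_succ, mul_assoc]
    have h3 : y ^ (n + 1) * y = y ^ (n + 2) := by rw [← pow_succ]
    rw [h2, h3, add_smul, one_smul]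
    abel

-- T * (y^n * X1) = y^n*X1*T + (n+1) • (y^(n+1) * X1)
lemma sj_TE {T y X1 : Module.End k V} (hTy : T * y = y * T + y * y)
    (hTx1 : T * X1 = X1 * T + y * X1) (n : ℕ) :
    T * (y ^ n * X1) = y ^ n * X1 * T + ((n : k) + 1) • (y ^ (n + 1) * X1) := by
  rw [← mul_assoc, sj_Tyn hTy, add_mul, smul_mul_assoc, mul_assoc (y^n), hTx1, mul_add]
  rw [← mul_assoc, ← mul_assoc, ← pow_succ, add_smul, one_smul]
  abel

-- D-version
lemma sj_DE {T y X1 : Module.End k V} (hTy : T * y = y * T + y * y)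
    (hTx1 : T * X1 = X1 * T + y * X1) (lam : k) (n : ℕ) :
    (T - lam • 1) * (y ^ n * X1)
      = y ^ n * X1 * (T - lam • 1) + ((n : k) + 1) • (y ^ (n + 1) * X1) := by
  have := sj_TE hTy hTx1 (k := k) (V := V) n
  rw [sub_mul, mul_sub, this]
  rw [smul_mul_assoc, mul_smul_comm, one_mul, mul_one]
  abel

end Aux2

section Aux3

variable {k V : Type*} [Field k] [AddCommGroup V] [Module k V]

-- trace (y * y) = 0 for y = X1*X2 + X2*X1
lemma sj_trace_yy [FiniteDimensional k V] {X1 X2 : Module.End k V} (h1 : X1 * X1 = 0)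
    (h2 : X2 ^ 2 * X1 = X1 * X2 ^ 2 + X1 * X2 * X1) :
    LinearMap.trace k V ((X1 * X2 + X2 * X1) * (X1 * X2 + X2 * X1)) = 0 := by
  set y := X1 * X2 + X2 * X1 with hy
  set u := X1 * X2 with hu
  -- T*u - u*T = y*u
  have hTu : X2 ^ 2 * u - u * X2 ^ 2 = y * u := by
    have hTx1 : X2 ^ 2 * X1 = X1 * X2 ^ 2 + y * X1 := by
      rw [hy, sj_yx1 h1]; exact h2
    calc X2 ^ 2 * u - u * X2 ^ 2 = (X2 ^ 2 * X1) * X2 - u * X2 ^ 2 := by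
          rw [hu]; noncomm_ring
    _ = (X1 * X2 ^ 2 + y * X1) * X2 - u * X2 ^ 2 := by rw [hTx1]
    _ = y * (X1 * X2) := by rw [hu]; noncomm_ring
    _ = y * u := by rw [hu]
  have htyu : LinearMap.trace k V (y * u) = 0 := by
    rw [← hTu, map_sub, LinearMap.trace_mul_comm, sub_self]
  -- y*y = y*u + y*(X2*X1)
  have hsplit : y * y = y * u + y * (X2 * X1) := by rw [hy, hu]; noncomm_ring
  have hcomm : X1 * y = y * X1 := (sj_comm_x1y h1).symm
  have h3 : LinearMap.trace k V (y * (X2 * X1)) = LinearMap.trace k V (y * u) := by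
    calc LinearMap.trace k V (y * (X2 * X1)) = LinearMap.trace k V ((y * X2) * X1) := by
          rw [mul_assoc]
    _ = LinearMap.trace k V (X1 * (y * X2)) := LinearMap.trace_mul_comm k (y * X2) X1
    _ = LinearMap.trace k V ((X1 * y) * X2) := by rw [mul_assoc]
    _ = LinearMap.trace k V ((y * X1) * X2) := by rw [hcomm]
    _ = LinearMap.trace k V (y * u) := by rw [hu, mul_assoc]
  rw [hsplit, map_add, h3, htyu, add_zero]

-- the double induction claim
lemma sj_claim {D y X1 : Module.End k V} {N0 : ℕ} (hyN : y ^ N0 = 0)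
    (hD : ∀ n : ℕ, D * (y ^ n * X1)
      = y ^ n * X1 * D + ((n : k) + 1) • (y ^ (n + 1) * X1)) :
    ∀ j kk n (v : V), N0 ≤ n + kk → (D ^ j) v = 0 → (D ^ (j + kk)) ((y ^ n * X1) v) = 0 := by
  intro j
  induction j with
  | zero =>
    intro kk n v _ hv
    simp only [pow_zero, Module.End.one_apply] at hv
    simp [hv]
  | succ j ih =>
    intro kk
    induction kk with
    | zero =>
      intro n v hn _
      have hyn : y ^ n = 0 := pow_eq_zero_of_le (by omega) hyN
      simp [hyn]
    | succ kk ihk =>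
      intro n v hn hv
      have e1 : (D ^ (j + 1 + (kk + 1))) ((y ^ n * X1) v)
          = (D ^ (j + 1 + kk)) (D ((y ^ n * X1) v)) := by
        rw [show j + 1 + (kk + 1) = (j + 1 + kk) + 1 by omega, pow_succ,
          Module.End.mul_apply]
      rw [e1]
      have e2 : D ((y ^ n * X1) v)
          = (y ^ n * X1) (D v) + ((n : k) + 1) • ((y ^ (n + 1) * X1) v) := by
        have := DFunLike.congr_fun (hD n) v
        simpa [Module.End.mul_apply] using this
      rw [e2, map_add, map_smul]
      have t1 : (D ^ (j + 1 + kk)) ((y ^ n * X1) (D v)) = 0 := by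
        have hv' : (D ^ j) (D v) = 0 := by
          rw [← Module.End.mul_apply, ← pow_succ]; exact hv
        have := ih (kk + 1) n (D v) hn hv'
        rwa [show j + (kk + 1) = j + 1 + kk by omega] at this
      have t2 : (D ^ (j + 1 + kk)) ((y ^ (n + 1) * X1) v) = 0 :=
        ihk (n + 1) v (by omega) hv
      rw [t1, t2, smul_zero, add_zero]

-- operator identity for X2-invariance of gen eigenspaces of y
lemma sj_AX2 {X1 X2 : Module.End k V} (h1 : X1 * X1 = 0)
    (h2 : X2 ^ 2 * X1 = X1 * X2 ^ 2 + X1 * X2 * X1) (lam : k) (N : ℕ) :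
    ((X1 * X2 + X2 * X1) - lam • 1) ^ (N + 1) * X2
      = X2 * ((X1 * X2 + X2 * X1) - lam • 1) ^ (N + 1)
        - ((N : k) + 1) • ((X1 * (X1 * X2 + X2 * X1))
            * ((X1 * X2 + X2 * X1) - lam • 1) ^ N) := by
  set y := X1 * X2 + X2 * X1 with hy
  set A := y - lam • (1 : Module.End k V) with hA
  set B := X1 * y with hB
  have hAX2 : A * X2 = X2 * A - B := by
    have hx2y := sj_x2y h1 h2
    rw [hA, hB, sub_mul, mul_sub, smul_mul_assoc, mul_smul_comm, one_mul, mul_one]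
    rw [show X2 * y = y * X2 + X1 * y from hx2y]
    abel
  have hAB : A * B = B * A := by
    have hcomm : X1 * y = y * X1 := (sj_comm_x1y h1).symm
    rw [hA, hB, sub_mul, mul_sub, smul_mul_assoc, mul_smul_comm, one_mul, mul_one]
    have : y * (X1 * y) = X1 * y * y := by rw [← mul_assoc, ← hcomm, mul_assoc]
    rw [this]
  induction N with
  | zero =>
    simpa using hAX2
  | succ N ih =>
    have e1 : A ^ (N + 2) * X2 = A * (A ^ (N + 1) * X2) := by
      rw [← mul_assoc, ← pow_succ']
    rw [e1, ih]
    rw [mul_sub, ← mul_assoc, hAX2, mul_smul_comm, ← mul_assoc, hAB]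
    rw [sub_mul, mul_assoc X2, ← pow_succ']
    rw [mul_assoc B, ← pow_succ']
    push_cast
    module

end Aux3
section Aux4

variable {k V : Type*} [Field k] [AddCommGroup V] [Module k V]

lemma sj_restrict_pow {f : Module.End k V} {p : Submodule k V}
    (hf : Set.MapsTo f p p) (N : ℕ) (w : p) :
    ((f.restrict hf ^ N) w : V) = (f ^ N) (w : V) := by
  induction N with
  | zero => simp
  | succ N ih =>
    rw [pow_succ', pow_succ', Module.End.mul_apply, Module.End.mul_apply]
    exact congrArg f ih

lemma sj_eigenvalue_y_eq_zero [CharZero k] [FiniteDimensional k V]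
    {X1 X2 : Module.End k V} (h1 : X1 * X1 = 0)
    (h2 : X2 ^ 2 * X1 = X1 * X2 ^ 2 + X1 * X2 * X1) {lam : k}
    (hlam : (X1 * X2 + X2 * X1).HasEigenvalue lam) : lam = 0 := by
  set y := X1 * X2 + X2 * X1 with hy
  set E := y.maxGenEigenspace lam with hE
  have hcomm : X1 * y = y * X1 := (sj_comm_x1y h1).symm
  -- X1 maps E to E
  have hmX1 : Set.MapsTo X1 E E :=
    Module.End.mapsTo_maxGenEigenspace_of_comm (by exact hcomm.symm) lam
  -- X2 maps E to E
  have hmX2 : Set.MapsTo X2 E E := by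
    intro v hv
    rw [SetLike.mem_coe, Module.End.mem_maxGenEigenspace] at hv ⊢
    obtain ⟨j, hj⟩ := hv
    refine ⟨j + 1, ?_⟩
    have hop := sj_AX2 h1 h2 lam j
    have := DFunLike.congr_fun hop v
    simp only [Module.End.mul_apply, LinearMap.sub_apply, LinearMap.smul_apply] at this
    rw [← hy] at this
    have hz1 : ((y - lam • 1) ^ (j + 1)) v = 0 := by
      rw [pow_succ', Module.End.mul_apply, hj, map_zero]
    rw [this, hz1, map_zero, hj]
    simp
  -- restricted operators
  set x1' := X1.restrict hmX1 with hx1'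
  set x2' := X2.restrict hmX2 with hx2'
  have h1' : x1' * x1' = 0 := by
    ext w
    have h1v := DFunLike.congr_fun h1 (w : V)
    simp only [Module.End.mul_apply, LinearMap.zero_apply] at h1v
    simp only [Module.End.mul_apply, LinearMap.zero_apply, hx1',
      LinearMap.restrict_coe_apply, ZeroMemClass.coe_zero]
    exact h1v
  have h2' : x2' ^ 2 * x1' = x1' * x2' ^ 2 + x1' * x2' * x1' := by
    ext w
    have h2v := DFunLike.congr_fun h2 (w : V)
    simp only [pow_two, Module.End.mul_apply, LinearMap.add_apply] at h2v
    simp only [pow_two, Module.End.mul_apply, LinearMap.add_apply, hx1', hx2',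
      LinearMap.restrict_coe_apply, Submodule.coe_add]
    exact h2v
  have htr : LinearMap.trace k E ((x1' * x2' + x2' * x1') * (x1' * x2' + x2' * x1')) = 0 :=
    sj_trace_yy h1' h2'
  -- y' = lam • 1 + A'
  have hmy : Set.MapsTo y E E := fun v hv => by
    have h1m := hmX1 (hmX2 hv)
    have h2m := hmX2 (hmX1 hv)
    have : y v = X1 (X2 v) + X2 (X1 v) := by simp [hy, Module.End.mul_apply]
    rw [SetLike.mem_coe] at h1m h2m ⊢
    rw [this]; exact E.add_mem h1m h2m
  have hmA : Set.MapsTo (y - lam • (1 : Module.End k V)) E E := fun v hv => by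
    have : (y - lam • (1 : Module.End k V)) v = y v - lam • v := by
      simp [LinearMap.sub_apply]
    rw [SetLike.mem_coe] at hv ⊢
    rw [this]
    exact E.sub_mem (hmy hv) (E.smul_mem lam hv)
  set A' := (y - lam • (1 : Module.End k V)).restrict hmA with hA'
  have hA'nil : IsNilpotent A' := by
    refine ⟨Module.finrank k V, ?_⟩
    ext w
    rw [sj_restrict_pow]
    have hw : (w : V) ∈ y.genEigenspace lam (Module.finrank k V) := by
      rw [← Module.End.maxGenEigenspace_eq_genEigenspace_finrank]
      exact w.2
    rw [Module.End.mem_genEigenspace_nat, LinearMap.mem_ker] at hw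
    simp only [LinearMap.zero_apply, ZeroMemClass.coe_zero]
    exact hw
  have hy' : x1' * x2' + x2' * x1' = lam • (1 : Module.End k E) + A' := by
    ext w
    simp only [LinearMap.add_apply, Module.End.mul_apply, LinearMap.smul_apply,
      Module.End.one_apply, hx1', hx2', hA', LinearMap.restrict_coe_apply,
      Submodule.coe_add, Submodule.coe_smul, LinearMap.sub_apply]
    have : y (w : V) = X1 (X2 (w : V)) + X2 (X1 (w : V)) := by
      simp [hy, Module.End.mul_apply]
    show X1 (X2 (w : V)) + X2 (X1 (w : V)) = lam • (w : V) + (y - lam • 1) (w : V)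
    rw [LinearMap.sub_apply, this, LinearMap.smul_apply, Module.End.one_apply]
    abel
  -- compute the trace
  have hexp : (lam • (1 : Module.End k E) + A') * (lam • (1 : Module.End k E) + A')
      = (lam * lam) • (1 : Module.End k E) + (lam • A' + lam • A') + A' * A' := by
    rw [mul_add, add_mul, add_mul]
    simp only [smul_mul_assoc, mul_smul_comm, one_mul, mul_one, smul_smul]
    abel
  have htrA' : LinearMap.trace k E A' = 0 :=
    (LinearMap.isNilpotent_trace_of_isNilpotent hA'nil).eq_zero
  have htrA'2 : LinearMap.trace k E (A' * A') = 0 := by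
    obtain ⟨m, hm⟩ := hA'nil
    have : IsNilpotent (A' * A') := ⟨m, by rw [← pow_two, ← pow_mul, two_mul, pow_add, hm, zero_mul]⟩
    exact (LinearMap.isNilpotent_trace_of_isNilpotent this).eq_zero
  rw [hy', hexp] at htr
  simp only [map_add, map_smul, htrA', htrA'2, LinearMap.trace_one,
    smul_zero, mul_zero, add_zero, smul_eq_mul] at htr
  -- E nontrivial
  obtain ⟨v, hv⟩ := hlam.exists_hasEigenvector
  have hvE : v ∈ E := by
    rw [hE, Module.End.mem_maxGenEigenspace]
    refine ⟨1, ?_⟩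
    have := hv.apply_eq_smul
    simp [pow_one, LinearMap.sub_apply, this]
  have : Nontrivial E := ⟨⟨⟨v, hvE⟩, 0, by simp [Subtype.ext_iff, hv.2]⟩⟩
  have hfr : (Module.finrank k E : k) ≠ 0 :=
    Nat.cast_ne_zero.mpr (Module.finrank_pos (R := k) (M := E)).ne'
  have hll : lam * lam = 0 := by
    rcases mul_eq_zero.mp htr with h | h
    · exact h
    · exact absurd h hfr
  exact mul_self_eq_zero.mp hll

end Aux4
section Aux5

variable {k V : Type*} [Field k] [AddCommGroup V] [Module k V]

lemma sj_y_nilpotent [IsAlgClosed k] [CharZero k] [FiniteDimensional k V]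
    {X1 X2 : Module.End k V} (h1 : X1 * X1 = 0)
    (h2 : X2 ^ 2 * X1 = X1 * X2 ^ 2 + X1 * X2 * X1) :
    ∃ N : ℕ, (X1 * X2 + X2 * X1) ^ N = 0 := by
  set y := X1 * X2 + X2 * X1 with hy
  have hbot : ∀ μ : k, μ ≠ 0 → y.maxGenEigenspace μ = ⊥ := by
    intro μ hμ
    by_contra hne
    have hunif : y.HasUnifEigenvalue μ ⊤ := hne
    have heig : y.HasEigenvalue μ :=
      (Module.End.hasUnifEigenvalue_iff_hasUnifEigenvalue_one (by norm_num)).mp hunif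
    exact hμ (sj_eigenvalue_y_eq_zero h1 h2 heig)
  have h0 : y.maxGenEigenspace 0 = ⊤ := by
    refine le_antisymm le_top ?_
    rw [← Module.End.iSup_maxGenEigenspace_eq_top y]
    apply iSup_le
    intro μ
    by_cases hμ : μ = 0
    · subst hμ; exact le_rfl
    · rw [hbot μ hμ]; exact bot_le
  refine ⟨Module.finrank k V, ?_⟩
  have := h0
  rw [Module.End.maxGenEigenspace_eq_genEigenspace_finrank,
    Module.End.genEigenspace_zero_nat] at this
  exact LinearMap.ker_eq_top.mp this

end Aux5
/-- A subspace `W` is a submodule for the representation `(X1, X2)` of the super Jordan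
plane if it is invariant under both `X1` and `X2`. -/
def IsSubrep {k V : Type*} [Field k] [AddCommGroup V] [Module k V]
    (X1 X2 : Module.End k V) (W : Submodule k V) : Prop :=
  Submodule.map X1 W ≤ W ∧ Submodule.map X2 W ≤ W

/-- The representation `(X1, X2)` is indecomposable: `V ≠ 0` and `V` is not the direct
sum of two nonzero submodules. -/
def IsIndecomposable {k V : Type*} [Field k] [AddCommGroup V] [Module k V]
    (X1 X2 : Module.End k V) : Prop :=
  Nontrivial V ∧ ¬ ∃ W L : Submodule k V, IsSubrep X1 X2 W ∧ IsSubrep X1 X2 L ∧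
    W ≠ ⊥ ∧ L ≠ ⊥ ∧ IsCompl W L

theorem stmt13 (k V : Type*) [Field k] [IsAlgClosed k] [CharZero k]
    [AddCommGroup V] [Module k V] [FiniteDimensional k V]
    (X1 X2 : Module.End k V) (h1 : X1 * X1 = 0)
    (h2 : X2 ^ 2 * X1 = X1 * X2 ^ 2 + X1 * X2 * X1) :
    iSupIndep (fun lam : k =>
        ⨆ j : ℕ, LinearMap.ker ((X2 ^ 2 - lam • (1 : Module.End k V)) ^ j)) ∧
    (⨆ lam : k, ⨆ j : ℕ, LinearMap.ker ((X2 ^ 2 - lam • (1 : Module.End k V)) ^ j)) = ⊤ ∧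
    (∀ lam : k, IsSubrep X1 X2
      (⨆ j : ℕ, LinearMap.ker ((X2 ^ 2 - lam • (1 : Module.End k V)) ^ j))) ∧
    (IsIndecomposable X1 X2 →
      ∃ lam : k, (∀ μ : k, (X2 ^ 2).HasEigenvalue μ ↔ μ = lam) ∧
        ∀ μ : k, X2.HasEigenvalue μ → μ ^ 2 = lam) := by
  have hkey : ∀ lam : k,
      (⨆ j : ℕ, LinearMap.ker ((X2 ^ 2 - lam • (1 : Module.End k V)) ^ j))
        = (X2 ^ 2).maxGenEigenspace lam := by
    intro lam
    rw [← Module.End.iSup_genEigenspace_eq]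
    exact iSup_congr fun j => (Module.End.genEigenspace_nat).symm
  -- invariance of each maximal generalized eigenspace
  have hsub : ∀ lam : k, IsSubrep X1 X2 ((X2 ^ 2).maxGenEigenspace lam) := by
    intro lam
    constructor
    · -- X1-invariance
      rw [Submodule.map_le_iff_le_comap]
      intro v hv
      rw [Submodule.mem_comap, Module.End.mem_maxGenEigenspace] at *
      obtain ⟨j, hj⟩ := hv
      obtain ⟨N0, hN0⟩ := sj_y_nilpotent h1 h2
      have hTy := sj_Ty h1 h2
      have hTx1 := sj_Tx1 h1 h2
      have hD := sj_DE hTy hTx1 lam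
      have hclaim := sj_claim hN0 hD j N0 0 v (by omega) hj
      refine ⟨j + N0, ?_⟩
      simpa [pow_zero, one_mul] using hclaim
    · -- X2-invariance
      rw [Submodule.map_le_iff_le_comap]
      intro v hv
      rw [Submodule.mem_comap]
      exact Module.End.mapsTo_maxGenEigenspace_of_comm
        ((Commute.refl X2).pow_left 2) lam hv
  refine ⟨?_, ?_, ?_, ?_⟩
  · rw [show (fun lam : k =>
        ⨆ j : ℕ, LinearMap.ker ((X2 ^ 2 - lam • (1 : Module.End k V)) ^ j))
        = fun lam : k => (X2 ^ 2).maxGenEigenspace lam from funext hkey]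
    exact Module.End.independent_maxGenEigenspace (X2 ^ 2)
  · simp_rw [hkey]
    exact Module.End.iSup_maxGenEigenspace_eq_top (X2 ^ 2)
  · intro lam
    rw [hkey lam]
    exact hsub lam
  · rintro ⟨hnt, hnosplit⟩
    obtain ⟨lam, hlam⟩ := Module.End.exists_eigenvalue (X2 ^ 2)
    have huniq : ∀ μ : k, (X2 ^ 2).HasEigenvalue μ → μ = lam := by
      intro μ hμ
      by_contra hne
      apply hnosplit
      refine ⟨(X2 ^ 2).maxGenEigenspace lam,
        ⨆ μ', ⨆ _ : μ' ≠ lam, (X2 ^ 2).maxGenEigenspace μ',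
        hsub lam, ?_, ?_, ?_, ?_, ?_⟩
      · constructor
        · rw [Submodule.map_iSup]
          apply iSup_le
          intro μ'
          rw [Submodule.map_iSup]
          apply iSup_le
          intro hne'
          exact le_iSup_of_le μ' (le_iSup_of_le hne' (hsub μ').1)
        · rw [Submodule.map_iSup]
          apply iSup_le
          intro μ'
          rw [Submodule.map_iSup]
          apply iSup_le
          intro hne'
          exact le_iSup_of_le μ' (le_iSup_of_le hne' (hsub μ').2)
      · intro hbotW
        refine hlam ?_
        have hle : (X2 ^ 2).genEigenspace lam 1 ≤ (X2 ^ 2).maxGenEigenspace lam :=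
          ((X2 ^ 2).genEigenspace lam).monotone le_top
        rw [hbotW] at hle
        exact le_bot_iff.mp hle
      · intro hbotL
        refine hμ ?_
        have hle : (X2 ^ 2).genEigenspace μ 1 ≤ (X2 ^ 2).maxGenEigenspace μ :=
          ((X2 ^ 2).genEigenspace μ).monotone le_top
        have hle2 : (X2 ^ 2).maxGenEigenspace μ
            ≤ ⨆ μ', ⨆ _ : μ' ≠ lam, (X2 ^ 2).maxGenEigenspace μ' :=
          le_iSup_of_le μ (le_iSup_of_le hne le_rfl)
        rw [hbotL] at hle2
        exact le_bot_iff.mp (hle.trans hle2)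
      · exact Module.End.independent_maxGenEigenspace (X2 ^ 2) lam
      · rw [codisjoint_iff]
        refine le_antisymm le_top ?_
        rw [← Module.End.iSup_maxGenEigenspace_eq_top (X2 ^ 2)]
        apply iSup_le
        intro μ'
        by_cases hμ' : μ' = lam
        · subst hμ'; exact le_sup_left
        · exact le_trans (le_iSup_of_le μ' (le_iSup (fun _ : μ' ≠ lam => (X2 ^ 2).maxGenEigenspace μ') hμ')) le_sup_right
    refine ⟨lam, fun μ => ⟨fun h => huniq μ h, fun h => h ▸ hlam⟩, fun μ hμ => ?_⟩
    exact huniq (μ ^ 2) (by simpa using hμ.pow 2)
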